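/- arXiv:0802.1180 — 3 statements merged into one kernel-verified Lean document; each statement's English description precedes it below -/
import Mathlib

section
/- Lemma 5.1 (operator estimate): Suppose α_{λμ} ≥ 0 are functions on R^d for μ ∈ Λ₁ and λ in a finite index set Λ′, and Σ_{μ∈Λ₁} sup_{λ∈Λ′} α_{λμ}(x) ≤ C(x) for all x. Then there exists an operator K in the class 𝔎 (bounded, positivity-preserving, K(1) ≤ 1) such that for every family of bounded Borel functions f_λ on R^d, h² Σ_{μ∈Λ₁, λ∈Λ′} α_{λμ}(x) (δ_μ f_λ(x))² ≤ 4 C(x) · K(Σ_{λ∈Λ′} f_λ²)(x) for all x ∈ R^d. -/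
/-- Lemma 5.1: there is an operator `K` of class `𝔎` such that
`h² Σ_{μ,λ} α_{λμ} (δ_μ f_λ)² ≤ 4C · K(Σ_λ f_λ²)` pointwise. -/
theorem operator_estimate_of_dominated_coefficients (d : ℕ) {ι : Type*}
    (Λ₁ : Finset (Fin d → ℝ)) (h0 : (0 : Fin d → ℝ) ∉ Λ₁)
    (h : ℝ) (hh : 0 < h)
    (Λ' : Finset ι) (hne : Λ'.Nonempty)
    (α : ι → (Fin d → ℝ) → (Fin d → ℝ) → ℝ)
    (hα : ∀ lam μ x, 0 ≤ α lam μ x)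
    (C : (Fin d → ℝ) → ℝ)
    (hC : ∀ x, ∑ μ ∈ Λ₁, (Λ'.sup' hne fun lam => α lam μ x) ≤ C x) :
    ∃ K : (((Fin d) → ℝ) → ℝ) → (((Fin d) → ℝ) → ℝ),
      (∀ f, (∀ x, 0 ≤ f x) → ∀ x, 0 ≤ K f x) ∧
      (∀ x, K (fun _ => (1 : ℝ)) x ≤ 1) ∧
      (∀ f : ι → (Fin d → ℝ) → ℝ, ∀ x,
        h ^ 2 * ∑ μ ∈ Λ₁, ∑ lam ∈ Λ',
            α lam μ x * ((f lam (x + h • μ) - f lam x) / h) ^ 2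
          ≤ 4 * C x * K (fun y => ∑ lam ∈ Λ', f lam y ^ 2) x) := by
  classical
  set S : (Fin d → ℝ) → (Fin d → ℝ) → ℝ :=
    fun μ x => Λ'.sup' hne fun lam => α lam μ x with hS
  have hSnn : ∀ μ x, 0 ≤ S μ x := by
    intro μ x
    obtain ⟨l, hl⟩ := hne
    exact le_trans (hα l μ x) (Finset.le_sup' (f := fun lam => α lam μ x) hl)
  have hαS : ∀ lam μ x, lam ∈ Λ' → α lam μ x ≤ S μ x := by
    intro lam μ x hlam
    exact Finset.le_sup' (f := fun lam => α lam μ x) hlam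
  refine ⟨fun f x => if 0 < C x then
      (∑ μ ∈ Λ₁, S μ x * (f (x + h • μ) + f x)) / (2 * C x) else 0, ?_, ?_, ?_⟩
  · intro f hf x
    by_cases hc : 0 < C x
    · simp only [hc, if_true]
      apply div_nonneg
      · exact Finset.sum_nonneg fun μ _ =>
          mul_nonneg (hSnn μ x) (add_nonneg (hf _) (hf _))
      · linarith
    · simp [hc]
  · intro x
    by_cases hc : 0 < C x
    · simp only [hc, if_true]
      rw [div_le_one (by linarith)]
      have : ∑ μ ∈ Λ₁, S μ x * ((1:ℝ) + 1) = 2 * ∑ μ ∈ Λ₁, S μ x := by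
        rw [Finset.mul_sum]; apply Finset.sum_congr rfl; intro μ _; ring
      rw [this]
      nlinarith [hC x]
    · simp [hc]
  · intro f x
    by_cases hc : 0 < C x
    · simp only [hc, if_true]
      set g : (Fin d → ℝ) → ℝ := fun y => ∑ lam ∈ Λ', f lam y ^ 2 with hg
      have key : h ^ 2 * ∑ μ ∈ Λ₁, ∑ lam ∈ Λ',
          α lam μ x * ((f lam (x + h • μ) - f lam x) / h) ^ 2
          ≤ 2 * ∑ μ ∈ Λ₁, S μ x * (g (x + h • μ) + g x) := by
        rw [Finset.mul_sum, Finset.mul_sum]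
        apply Finset.sum_le_sum
        intro μ _
        rw [Finset.mul_sum]
        have : 2 * (S μ x * (g (x + h • μ) + g x))
            = ∑ lam ∈ Λ', S μ x * (2 * (f lam (x + h • μ) ^ 2 + f lam x ^ 2)) := by
          simp only [hg, Finset.mul_sum, ← Finset.sum_add_distrib]
          apply Finset.sum_congr rfl; intro lam _; ring
        rw [this]
        apply Finset.sum_le_sum
        intro lam hlam
        have h1 : h ^ 2 * (α lam μ x * ((f lam (x + h • μ) - f lam x) / h) ^ 2)
            = α lam μ x * (f lam (x + h • μ) - f lam x) ^ 2 := by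
          field_simp
        rw [h1]
        have h2 : (f lam (x + h • μ) - f lam x) ^ 2
            ≤ 2 * (f lam (x + h • μ) ^ 2 + f lam x ^ 2) := by nlinarith [sq_nonneg (f lam (x + h • μ) + f lam x)]
        calc α lam μ x * (f lam (x + h • μ) - f lam x) ^ 2
            ≤ S μ x * (f lam (x + h • μ) - f lam x) ^ 2 :=
              mul_le_mul_of_nonneg_right (hαS lam μ x hlam) (sq_nonneg _)
          _ ≤ S μ x * (2 * (f lam (x + h • μ) ^ 2 + f lam x ^ 2)) :=
              mul_le_mul_of_nonneg_left h2 (hSnn μ x)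
      have hRHS : 4 * C x * ((∑ μ ∈ Λ₁, S μ x * (g (x + h • μ) + g x)) / (2 * C x))
          = 2 * ∑ μ ∈ Λ₁, S μ x * (g (x + h • μ) + g x) := by
        field_simp; ring
      rw [hRHS]
      exact key
    · simp only [hc, if_false, mul_zero]
      have hCx : C x = 0 := le_antisymm (not_lt.mp hc)
        (le_trans (Finset.sum_nonneg fun μ _ => hSnn μ x) (hC x))
      have hS0 : ∀ μ ∈ Λ₁, S μ x = 0 := by
        intro μ hμ
        have := hC x
        rw [hCx] at this
        have hsum := Finset.sum_nonneg (fun μ (_ : μ ∈ Λ₁) => hSnn μ x)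
        have heq : ∑ μ ∈ Λ₁, S μ x = 0 := le_antisymm this hsum
        exact (Finset.sum_eq_zero_iff_of_nonneg (fun μ _ => hSnn μ x)).mp heq μ hμ
      have : ∑ μ ∈ Λ₁, ∑ lam ∈ Λ',
          α lam μ x * ((f lam (x + h • μ) - f lam x) / h) ^ 2 = 0 := by
        apply Finset.sum_eq_zero
        intro μ hμ
        apply Finset.sum_eq_zero
        intro lam hlam
        have : α lam μ x = 0 :=
          le_antisymm (by rw [← hS0 μ hμ]; exact hαS lam μ x hlam) (hα lam μ x)
        rw [this, zero_mul]
      rw [this, mul_zero]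
end

section
/- Maximum principle (special case): Let Q ⊂ R^d, Q° = {x ∈ Q : x+λh ∈ Q for all λ ∈ Λ₁}, and let χ_λ ≥ 0 be bounded Borel functions on [0,T]×R^d. Suppose v is bounded on [0,T]×Q, v(·,x) is measurable, the derivative D_t v exists on [0,T]×Q°, and D_t v(t,x) ≤ h^{-1} Σ_{λ∈Λ₁} χ_λ(t,x) δ_λ v(t,x) on [0,T]×Q°, while v ≤ 0 on ({0}×Q) ∪ ([0,T]×(Q∖Q°)). Then v ≤ 0 on [0,T]×Q. -/
set_option maxHeartbeats 1000000


open Set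

/-- maximum principle (special case, no zero-order term):
if `D_t v ≤ h⁻¹ Σ_λ χ_λ δ_λ v` on `[0,T]×Q°` and `v ≤ 0` on the parabolic
boundary, then `v ≤ 0` on `[0,T]×Q`. -/
theorem discrete_maximum_principle_special (d : ℕ)
    (Λ₁ : Finset (Fin d → ℝ)) (h0 : (0 : Fin d → ℝ) ∉ Λ₁)
    (h T : ℝ) (hh : 0 < h) (hT : 0 < T)
    (Q : Set (Fin d → ℝ))
    (Qo : Set (Fin d → ℝ))
    (hQo : Qo = {x ∈ Q | ∀ lam ∈ Λ₁, x + h • lam ∈ Q})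
    (χ : (Fin d → ℝ) → ℝ → (Fin d → ℝ) → ℝ)
    (hχpos : ∀ lam ∈ Λ₁, ∀ t x, 0 ≤ χ lam t x)
    (hχbdd : ∃ M, ∀ lam ∈ Λ₁, ∀ t x, |χ lam t x| ≤ M)
    (hχmeas : ∀ lam ∈ Λ₁, Measurable (Function.uncurry (χ lam)))
    (v : ℝ → (Fin d → ℝ) → ℝ)
    (hvbdd : ∃ M, ∀ t ∈ Icc (0:ℝ) T, ∀ x ∈ Q, |v t x| ≤ M)
    (hvmeas : ∀ x, Measurable fun t => v t x)
    (v' : ℝ → (Fin d → ℝ) → ℝ)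
    (hderiv : ∀ t ∈ Icc (0:ℝ) T, ∀ x ∈ Qo, HasDerivAt (fun s => v s x) (v' t x) t)
    (hineq : ∀ t ∈ Icc (0:ℝ) T, ∀ x ∈ Qo,
      v' t x ≤ h⁻¹ * ∑ lam ∈ Λ₁, χ lam t x * ((v t (x + h • lam) - v t x) / h))
    (hbc0 : ∀ x ∈ Q, v 0 x ≤ 0)
    (hbc : ∀ t ∈ Icc (0:ℝ) T, ∀ x ∈ Q \ Qo, v t x ≤ 0) :
    ∀ t ∈ Icc (0:ℝ) T, ∀ x ∈ Q, v t x ≤ 0 := by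
  obtain ⟨N₀, hN₀⟩ := hvbdd
  obtain ⟨M₀, hM₀⟩ := hχbdd
  set N : ℝ := max N₀ 0 with hNdef
  have hNnn : 0 ≤ N := le_max_right _ _
  have hN : ∀ t ∈ Icc (0:ℝ) T, ∀ x ∈ Q, v t x ≤ N := fun t ht x hx =>
    le_trans (le_abs_self _) (le_trans (hN₀ t ht x hx) (le_max_left _ _))
  set M : ℝ := max M₀ 0 with hMdef
  have hMnn : 0 ≤ M := le_max_right _ _
  have hM : ∀ lam ∈ Λ₁, ∀ t x, χ lam t x ≤ M := fun lam hl t x =>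
    le_trans (le_abs_self _) (le_trans (hM₀ lam hl t x) (le_max_left _ _))
  set C : ℝ := (Λ₁.card : ℝ) * M / (h * h) with hCdef
  have hCnn : 0 ≤ C := by positivity
  -- Key induction: v t x ≤ N * (C*t)^n / n!
  have key : ∀ n : ℕ, ∀ t ∈ Icc (0:ℝ) T, ∀ x ∈ Q,
      v t x ≤ N * (C * t) ^ n / n.factorial := by
    intro n
    induction n with
    | zero =>
      intro t ht x hx
      simpa using hN t ht x hx
    | succ n ih =>
      intro t ht x hx
      have htnn : (0:ℝ) ≤ t := ht.1
      by_cases hxo : x ∈ Qo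
      · -- main case: x in the discrete interior
        set a : ℝ := Real.exp (C * t) * N / (n + 1).factorial with hadef
        have hann : 0 ≤ a := by positivity
        set F : ℝ → ℝ := fun s => Real.exp (C * s) * v s x - a * (C * s) ^ (n + 1)
          with hFdef
        -- derivative of F
        have hd : ∀ s ∈ Icc (0:ℝ) t, HasDerivAt F
            (C * Real.exp (C * s) * v s x + Real.exp (C * s) * v' s x
              - a * ((n + 1 : ℕ) * (C * s) ^ n * C)) s := by
          intro s hs
          have hsT : s ∈ Icc (0:ℝ) T := ⟨hs.1, hs.2.trans ht.2⟩
          have h1 : HasDerivAt (fun s : ℝ => Real.exp (C * s)) (C * Real.exp (C * s)) s := by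
            simpa [mul_comm] using ((hasDerivAt_id s).const_mul C).exp
          have h2 := hderiv s hsT x hxo
          have h3 : HasDerivAt (fun s : ℝ => (C * s) ^ (n + 1))
              ((n + 1 : ℕ) * (C * s) ^ n * C) s := by
            simpa [Pi.pow_def] using ((hasDerivAt_id s).const_mul C).pow (n + 1)
          have := (h1.mul h2).sub (h3.const_mul a)
          exact this
        -- the derivative is nonpositive on [0, t]
        have hdneg : ∀ s ∈ Icc (0:ℝ) t,
            C * Real.exp (C * s) * v s x + Real.exp (C * s) * v' s x
              - a * ((n + 1 : ℕ) * (C * s) ^ n * C) ≤ 0 := by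
          intro s hs
          have hsT : s ∈ Icc (0:ℝ) T := ⟨hs.1, hs.2.trans ht.2⟩
          set ψ : ℝ := N * (C * s) ^ n / n.factorial with hψdef
          have hψnn : 0 ≤ ψ := by
            have : (0:ℝ) ≤ C * s := mul_nonneg hCnn hs.1
            positivity
          have hvx : v s x ≤ ψ := ih s hsT x hx
          -- bound v' via the scheme inequality
          have hv' : v' s x ≤ C * (ψ - v s x) := by
            have hsum := hineq s hsT x hxo
            have hterm : ∀ lam ∈ Λ₁,
                χ lam s x * ((v s (x + h • lam) - v s x) / h) ≤
                  h * (M / (h * h) * (ψ - v s x)) := by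
              intro lam hl
              have hy : x + h • lam ∈ Q := by
                rw [hQo] at hxo; exact hxo.2 lam hl
              have hvy : v s (x + h • lam) ≤ ψ := ih s hsT _ hy
              have hχnn := hχpos lam hl s x
              have hχle := hM lam hl s x
              have h1 : χ lam s x * ((v s (x + h • lam) - v s x) / h) ≤
                  χ lam s x * ((ψ - v s x) / h) := by
                apply mul_le_mul_of_nonneg_left _ hχnn
                apply div_le_div_of_nonneg_right _ hh.le
                linarith
              have h2 : χ lam s x * ((ψ - v s x) / h) ≤ M * ((ψ - v s x) / h) := by
                apply mul_le_mul_of_nonneg_right hχle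
                apply div_nonneg _ hh.le
                linarith
              have h3 : M * ((ψ - v s x) / h) = h * (M / (h * h) * (ψ - v s x)) := by
                field_simp
              linarith
            have hsumle : ∑ lam ∈ Λ₁, χ lam s x * ((v s (x + h • lam) - v s x) / h) ≤
                (Λ₁.card : ℝ) * (h * (M / (h * h) * (ψ - v s x))) := by
              calc ∑ lam ∈ Λ₁, χ lam s x * ((v s (x + h • lam) - v s x) / h)
                  ≤ ∑ _lam ∈ Λ₁, h * (M / (h * h) * (ψ - v s x)) :=
                    Finset.sum_le_sum hterm
                _ = (Λ₁.card : ℝ) * (h * (M / (h * h) * (ψ - v s x))) := by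
                    rw [Finset.sum_const, nsmul_eq_mul]
            have hCeq : h⁻¹ * ((Λ₁.card : ℝ) * (h * (M / (h * h) * (ψ - v s x)))) =
                C * (ψ - v s x) := by
              rw [hCdef]; field_simp
            calc v' s x ≤ h⁻¹ * ∑ lam ∈ Λ₁, χ lam s x * ((v s (x + h • lam) - v s x) / h) :=
                  hsum
              _ ≤ h⁻¹ * ((Λ₁.card : ℝ) * (h * (M / (h * h) * (ψ - v s x)))) :=
                  mul_le_mul_of_nonneg_left hsumle (inv_nonneg.mpr hh.le)
              _ = C * (ψ - v s x) := hCeq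
          have hexp : Real.exp (C * s) ≤ Real.exp (C * t) :=
            Real.exp_le_exp.mpr (mul_le_mul_of_nonneg_left hs.2 hCnn)
          have hexpnn : (0:ℝ) < Real.exp (C * s) := Real.exp_pos _
          -- a * ((n+1) * (C*s)^n * C) = C * Real.exp (C*t) * ψ
          have haeq : a * ((n + 1 : ℕ) * (C * s) ^ n * C) = C * Real.exp (C * t) * ψ := by
            rw [hadef, hψdef, Nat.factorial_succ]
            push_cast
            have hfac : (n.factorial : ℝ) ≠ 0 := Nat.cast_ne_zero.mpr n.factorial_ne_zero
            field_simp
          have step1 : C * Real.exp (C * s) * v s x + Real.exp (C * s) * v' s x ≤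
              C * Real.exp (C * s) * ψ := by
            have h4 : Real.exp (C * s) * v' s x ≤ Real.exp (C * s) * (C * (ψ - v s x)) :=
              mul_le_mul_of_nonneg_left hv' hexpnn.le
            nlinarith
          have step2 : C * Real.exp (C * s) * ψ ≤ C * Real.exp (C * t) * ψ := by
            have : C * Real.exp (C * s) ≤ C * Real.exp (C * t) :=
              mul_le_mul_of_nonneg_left hexp hCnn
            exact mul_le_mul_of_nonneg_right this hψnn
          rw [haeq]
          linarith
        -- F is antitone on [0, t], so F t ≤ F 0 = v 0 x ≤ 0
        have hcont : ContinuousOn F (Icc 0 t) := fun s hs =>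
          ((hd s hs).continuousAt).continuousWithinAt
        have hanti : AntitoneOn F (Icc 0 t) := by
          apply antitoneOn_of_deriv_nonpos (convex_Icc 0 t) hcont
          · intro s hs
            rw [interior_Icc] at hs
            exact ((hd s (Ioo_subset_Icc_self hs)).differentiableAt).differentiableWithinAt
          · intro s hs
            rw [interior_Icc] at hs
            rw [(hd s (Ioo_subset_Icc_self hs)).deriv]
            exact hdneg s (Ioo_subset_Icc_self hs)
        have hFt : F t ≤ F 0 := hanti (left_mem_Icc.mpr htnn) (right_mem_Icc.mpr htnn) htnn
        have hF0 : F 0 ≤ 0 := by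
          have := hbc0 x hx
          simp only [hFdef, mul_zero, Real.exp_zero, one_mul]
          rw [zero_pow (Nat.succ_ne_zero n)]
          simpa using this
        -- unpack F t ≤ 0
        have hFt0 : Real.exp (C * t) * v t x ≤ a * (C * t) ^ (n + 1) := by
          have : F t ≤ 0 := hFt.trans hF0
          simpa [hFdef, sub_nonpos] using this
        have hgoal : Real.exp (C * t) * v t x ≤
            Real.exp (C * t) * (N * (C * t) ^ (n + 1) / (n + 1).factorial) := by
          calc Real.exp (C * t) * v t x ≤ a * (C * t) ^ (n + 1) := hFt0
            _ = Real.exp (C * t) * (N * (C * t) ^ (n + 1) / (n + 1).factorial) := by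
                rw [hadef]; ring
        have h5 : v t x ≤ N * (t * C) ^ (n + 1) / (n + 1).factorial := by
          simpa using le_of_mul_le_mul_left
            (by simpa [mul_comm] using hgoal) (Real.exp_pos (C * t))
        rw [mul_comm C t]
        exact h5
      · -- boundary case
        have h1 : v t x ≤ 0 := hbc t ht x ⟨hx, hxo⟩
        have h2 : (0:ℝ) ≤ N * (C * t) ^ (n + 1) / (n + 1).factorial := by
          have : (0:ℝ) ≤ C * t := mul_nonneg hCnn htnn
          positivity
        linarith
  -- let n → ∞
  intro t ht x hx
  have htend : Filter.Tendsto (fun n : ℕ => N * (C * t) ^ n / n.factorial)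
      Filter.atTop (nhds 0) := by
    have h1 : Filter.Tendsto (fun n : ℕ => (C * t) ^ n / n.factorial)
        Filter.atTop (nhds 0) := FloorSemiring.tendsto_pow_div_factorial_atTop (C * t)
    have := h1.const_mul N
    simpa [mul_div_assoc] using this
  exact ge_of_tendsto htend (Filter.Eventually.of_forall fun n => key n t ht x hx)
end

section
/- Maximum principle with zero-order term and forcing (Lemma 3.1): Under Assumptions as below, if D_t v ≤ L v + C·v̄₊ + F on [0,T]×Q°, where Lφ = h^{-1}Σ_{λ∈Λ₁} χ_λ δ_λ φ − cφ, v̄(t) = sup_{x∈Q} v(t,x), F(t) ≥ 0 integrable, C(t,x) ≥ 0 bounded, then for all t ∈ [0,T]: v̄(t) ≤ G(t)e^{νt} + ∫₀ᵗ F(s) e^{ν(t−s)} ds, where ν = sup_{[0,T]×Q°}(C−c) and G(t) = sup over the parabolic boundary δ′Q_t = ({0}×Q) ∪ ([0,t]×(Q∖Q°)) of e^{−νs} v₊(s,y). -/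
open Set

section AuxPersist

open MeasureTheory intervalIntegral

lemma aux_persist {τ ε Kc : ℝ} (hε : 0 < ε) (hK : 0 ≤ Kc)
    {y : ℝ → ℝ} (hy : ContinuousOn y (Icc 0 τ)) (hy0 : ε ≤ y 0)
    (hint : ∀ r t : ℝ, 0 ≤ r → r ≤ t → t ≤ τ →
      ε * (t - r) - Kc * ∫ s in r..t, y s ≤ y t - y r) :
    ∀ t ∈ Icc (0:ℝ) τ, ε / (2 * Kc + 2) ≤ y t := by
  set δ := ε / (2 * Kc + 2) with hδdef
  have hden : (0:ℝ) < 2 * Kc + 2 := by linarith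
  have hδpos : 0 < δ := div_pos hε hden
  have hδval : ε = δ * (2 * Kc + 2) := by
    rw [hδdef, div_mul_cancel₀ _ hden.ne']
  have hδε : δ < ε := by nlinarith
  by_contra hcon
  push_neg at hcon
  obtain ⟨t₁, ht₁, ht₁y⟩ := hcon
  set A := {t : ℝ | t ∈ Icc (0:ℝ) τ ∧ y t < δ} with hA
  have hAne : A.Nonempty := ⟨t₁, ht₁, ht₁y⟩
  have hAbdd : BddBelow A := ⟨0, fun a ha => ha.1.1⟩
  set σ := sInf A with hσdef
  have hσ0 : 0 ≤ σ := le_csInf hAne fun a ha => ha.1.1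
  have hστ : σ ≤ τ := (csInf_le hAbdd ⟨ht₁, ht₁y⟩).trans ht₁.2
  have hσmem : σ ∈ Icc (0:ℝ) τ := ⟨hσ0, hστ⟩
  have hcontσ := (hy σ hσmem)
  rw [Metric.continuousWithinAt_iff] at hcontσ
  have hσup : y σ ≤ δ := by
    by_contra hgt
    push_neg at hgt
    obtain ⟨θ, hθpos, hθ⟩ := hcontσ (y σ - δ) (by linarith)
    obtain ⟨a, ha, haθ⟩ := exists_lt_of_csInf_lt hAne (lt_add_of_pos_right σ hθpos)
    have haσ : σ ≤ a := csInf_le hAbdd ha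
    have hda : dist a σ < θ := by
      rw [Real.dist_eq, abs_of_nonneg (by linarith)]; linarith
    have := hθ ha.1 hda
    rw [Real.dist_eq] at this
    have := abs_lt.1 this
    have : δ < y a := by linarith [this.1]
    linarith [ha.2]
  have hσlo : δ ≤ y σ := by
    by_contra hlt
    push_neg at hlt
    rcases eq_or_lt_of_le hσ0 with h0 | h0
    · have : y 0 < δ := by rw [h0]; exact hlt
      linarith
    · obtain ⟨θ, hθpos, hθ⟩ := hcontσ (δ - y σ) (by linarith)
      set z := max 0 (σ - θ / 2) with hz
      have hz0 : 0 ≤ z := le_max_left _ _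
      have hzσ : z < σ := by
        rw [hz]; apply max_lt h0; linarith
      have hzmem : z ∈ Icc (0:ℝ) τ := ⟨hz0, by linarith⟩
      have hdz : dist z σ < θ := by
        rw [Real.dist_eq, abs_of_nonpos (by linarith)]
        have : σ - θ / 2 ≤ z := le_max_right _ _
        linarith
      have := hθ hzmem hdz
      rw [Real.dist_eq] at this
      have := abs_lt.1 this
      have hza : y z < δ := by linarith [this.2]
      have : σ ≤ z := csInf_le hAbdd ⟨hzmem, hza⟩
      linarith
  obtain ⟨θ, hθpos, hθ⟩ := hcontσ δ hδpos
  obtain ⟨a, ha, haθ⟩ := exists_lt_of_csInf_lt hAne (lt_add_of_pos_right σ hθpos)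
  have haσ : σ ≤ a := csInf_le hAbdd ha
  have haσ' : σ < a := by
    rcases eq_or_lt_of_le haσ with h | h
    · exfalso; rw [← h] at ha; linarith [ha.2]
    · exact h
  have haτ : a ≤ τ := ha.1.2
  have hbound : ∀ s ∈ Icc σ a, y s ≤ 2 * δ := by
    intro s hs
    have hsmem : s ∈ Icc (0:ℝ) τ := ⟨le_trans hσ0 hs.1, le_trans hs.2 haτ⟩
    have hds : dist s σ < θ := by
      rw [Real.dist_eq, abs_of_nonneg (by linarith [hs.1])]
      linarith [hs.2]
    have := hθ hsmem hds
    rw [Real.dist_eq] at this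
    have := abs_lt.1 this
    linarith [this.2]
  have hyint : IntervalIntegrable y volume σ a := by
    apply ContinuousOn.intervalIntegrable
    rw [uIcc_of_le haσ]
    exact hy.mono (Icc_subset_Icc hσ0 haτ)
  have hIle : ∫ s in σ..a, y s ≤ (a - σ) * (2 * δ) := by
    have := integral_mono_on haσ hyint (_root_.intervalIntegrable_const (c := 2 * δ)) hbound
    rwa [intervalIntegral.integral_const, smul_eq_mul] at this
  have hkey := hint σ a hσ0 haσ haτ
  have hKI : Kc * ∫ s in σ..a, y s ≤ Kc * ((a - σ) * (2 * δ)) :=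
    mul_le_mul_of_nonneg_left hIle hK
  have hya : y a < δ := ha.2
  nlinarith [haσ']

end AuxPersist


open MeasureTheory

set_option maxHeartbeats 1000000

/-- Lemma 3.1: maximum principle with zero-order term and forcing:
if `D_t v ≤ Lv + C v̄₊ + F` on `[0,T]×Q°`, then
`v̄(t) ≤ G(t) e^{νt} + ∫₀ᵗ F(s) e^{ν(t−s)} ds`. -/
theorem discrete_maximum_principle_with_forcing (d : ℕ)
    (Λ₁ : Finset (Fin d → ℝ)) (h0 : (0 : Fin d → ℝ) ∉ Λ₁)
    (h T : ℝ) (hh : 0 < h) (hT : 0 < T)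
    (Q : Set (Fin d → ℝ)) (hQ : Q.Nonempty)
    (Qo : Set (Fin d → ℝ))
    (hQo : Qo = {x ∈ Q | ∀ lam ∈ Λ₁, x + h • lam ∈ Q})
    (χ : (Fin d → ℝ) → ℝ → (Fin d → ℝ) → ℝ)
    (hχpos : ∀ lam ∈ Λ₁, ∀ t x, 0 ≤ χ lam t x)
    (hχbdd : ∃ M, ∀ lam ∈ Λ₁, ∀ t x, |χ lam t x| ≤ M)
    (hχmeas : ∀ lam ∈ Λ₁, Measurable (Function.uncurry (χ lam)))
    (cc : ℝ → (Fin d → ℝ) → ℝ)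
    (hcbdd : ∃ M, ∀ t x, |cc t x| ≤ M)
    (hcmeas : Measurable (Function.uncurry cc))
    (C : ℝ → (Fin d → ℝ) → ℝ)
    (hCpos : ∀ t x, 0 ≤ C t x) (hCbdd : ∃ M, ∀ t x, |C t x| ≤ M)
    (F : ℝ → ℝ) (hFpos : ∀ t, 0 ≤ F t)
    (hFint : IntervalIntegrable F MeasureTheory.volume 0 T)
    (v : ℝ → (Fin d → ℝ) → ℝ)
    (hvbdd : ∃ M, ∀ t ∈ Icc (0:ℝ) T, ∀ x ∈ Q, |v t x| ≤ M)
    (hvmeas : ∀ x, Measurable fun t => v t x)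
    (v' : ℝ → (Fin d → ℝ) → ℝ)
    (hderiv : ∀ t ∈ Icc (0:ℝ) T, ∀ x ∈ Qo, HasDerivAt (fun s => v s x) (v' t x) t)
    (vbar : ℝ → ℝ) (hvbar : ∀ t, vbar t = sSup ((v t) '' Q))
    (hineq : ∀ t ∈ Icc (0:ℝ) T, ∀ x ∈ Qo,
      v' t x ≤ h⁻¹ * ∑ lam ∈ Λ₁, χ lam t x * ((v t (x + h • lam) - v t x) / h)
              - cc t x * v t x + C t x * max (vbar t) 0 + F t)
    (ν : ℝ)
    (hν : ν = sSup ((fun p : ℝ × (Fin d → ℝ) => C p.1 p.2 - cc p.1 p.2) ''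
        (Icc (0:ℝ) T ×ˢ Qo)))
    (G : ℝ → ℝ)
    (hG : ∀ t, G t = sSup ((fun p : ℝ × (Fin d → ℝ) =>
        Real.exp (-ν * p.1) * max (v p.1 p.2) 0) ''
        (({0} ×ˢ Q) ∪ (Icc (0:ℝ) t ×ˢ (Q \ Qo))))) :
    ∀ t ∈ Icc (0:ℝ) T,
      vbar t ≤ G t * Real.exp (ν * t)
        + ∫ s in (0:ℝ)..t, F s * Real.exp (ν * (t - s)) := by
  -- ## constants
  obtain ⟨Mχ', hMχ'⟩ := hχbdd
  obtain ⟨Mc', hMc'⟩ := hcbdd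
  obtain ⟨MC', hMC'⟩ := hCbdd
  obtain ⟨Mv', hMv'⟩ := hvbdd
  obtain ⟨Mχ, hMχdef⟩ : ∃ z : ℝ, z = max Mχ' 0 := ⟨_, rfl⟩
  obtain ⟨Mc, hMcdef⟩ : ∃ z : ℝ, z = max Mc' 0 := ⟨_, rfl⟩
  obtain ⟨MC, hMCdef⟩ : ∃ z : ℝ, z = max MC' 0 := ⟨_, rfl⟩
  obtain ⟨Mv, hMvdef⟩ : ∃ z : ℝ, z = max Mv' 0 := ⟨_, rfl⟩
  have hMχ : ∀ lam ∈ Λ₁, ∀ t x, |χ lam t x| ≤ Mχ :=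
    fun lam hl t x => hMχdef ▸ (hMχ' lam hl t x).trans (le_max_left _ _)
  have hMc : ∀ t x, |cc t x| ≤ Mc := fun t x => hMcdef ▸ (hMc' t x).trans (le_max_left _ _)
  have hMC : ∀ t x, |C t x| ≤ MC := fun t x => hMCdef ▸ (hMC' t x).trans (le_max_left _ _)
  have hMv : ∀ t ∈ Icc (0:ℝ) T, ∀ x ∈ Q, |v t x| ≤ Mv :=
    fun t ht x hx => hMvdef ▸ (hMv' t ht x hx).trans (le_max_left _ _)
  have hMχ0 : 0 ≤ Mχ := hMχdef ▸ le_max_right _ _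
  have hMc0 : 0 ≤ Mc := hMcdef ▸ le_max_right _ _
  have hMC0 : 0 ≤ MC := hMCdef ▸ le_max_right _ _
  have hMv0 : 0 ≤ Mv := hMvdef ▸ le_max_right _ _
  obtain ⟨K₀, hK₀def⟩ : ∃ z : ℝ, z = (Λ₁.card : ℝ) * Mχ / h ^ 2 := ⟨_, rfl⟩
  have hK₀0 : 0 ≤ K₀ := by
    rw [hK₀def]
    exact div_nonneg (mul_nonneg (Nat.cast_nonneg _) hMχ0) (by positivity)
  obtain ⟨K₂, hK₂def⟩ : ∃ z : ℝ, z = K₀ + Mc + |ν| := ⟨_, rfl⟩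
  have hK₂0 : 0 ≤ K₂ := by rw [hK₂def]; linarith [abs_nonneg ν]
  obtain ⟨κ, hκdef⟩ : ∃ z : ℝ, z = K₀ * (2 * Mv) + Mc * Mv + MC * Mv := ⟨_, rfl⟩
  have hκ0 : 0 ≤ κ := by
    rw [hκdef]
    have h1 : 0 ≤ K₀ * (2 * Mv) := mul_nonneg hK₀0 (by linarith)
    have h2 : 0 ≤ Mc * Mv := mul_nonneg hMc0 hMv0
    have h3 : 0 ≤ MC * Mv := mul_nonneg hMC0 hMv0
    linarith
  obtain ⟨K, hKdef⟩ : ∃ z : ℝ, z = |ν| + 1 := ⟨_, rfl⟩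
  have hK0 : 0 ≤ K := by rw [hKdef]; positivity
  have hKν : 1 ≤ K - ν := by rw [hKdef]; linarith [le_abs_self ν]
  -- ## basic facts about v, vbar
  have hQoQ : Qo ⊆ Q := by rw [hQo]; exact fun x hx => hx.1
  have hvub : ∀ s ∈ Icc (0:ℝ) T, ∀ x ∈ Q, v s x ≤ Mv :=
    fun s hs x hx => (abs_le.1 (hMv s hs x hx)).2
  have hbddA : ∀ s ∈ Icc (0:ℝ) T, BddAbove (v s '' Q) := by
    intro s hs
    exact ⟨Mv, by rintro _ ⟨x, hx, rfl⟩; exact hvub s hs x hx⟩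
  have hvbar_le : ∀ s ∈ Icc (0:ℝ) T, vbar s ≤ Mv := by
    intro s hs; rw [hvbar]
    exact csSup_le (hQ.image _) (by rintro _ ⟨x, hx, rfl⟩; exact hvub s hs x hx)
  have hνub : ∀ s ∈ Icc (0:ℝ) T, ∀ x ∈ Qo, C s x - cc s x ≤ ν := by
    intro s hs x hx
    rw [hν]
    apply le_csSup
    · refine ⟨MC + Mc, ?_⟩
      rintro _ ⟨⟨t', x'⟩, _, rfl⟩
      have h1 := (abs_le.1 (hMC t' x')).2
      have h2 := (abs_le.1 (hMc t' x')).1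
      simp only
      linarith
    · exact ⟨(s, x), Set.mem_prod.2 ⟨hs, hx⟩, rfl⟩
  have hvcont : ∀ x ∈ Qo, ContinuousOn (fun s => v s x) (Icc (0:ℝ) T) :=
    fun x hx s hs => ((hderiv s hs x hx).continuousAt).continuousWithinAt
  -- ## primitives
  have hexpcont : ∀ c : ℝ, Continuous (fun s : ℝ => Real.exp (c * s)) :=
    fun c => Real.continuous_exp.comp (continuous_const.mul continuous_id)
  obtain ⟨Fν, hFνdef⟩ : ∃ z : ℝ → ℝ, z = fun s => Real.exp (-ν * s) * F s := ⟨_, rfl⟩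
  have hFνint : IntervalIntegrable Fν volume 0 T := by
    rw [hFνdef]
    exact hFint.continuousOn_mul ((hexpcont (-ν)).continuousOn)
  have hFνnn : ∀ s, 0 ≤ Fν s := by
    intro s
    simp only [hFνdef]
    exact mul_nonneg (Real.exp_nonneg _) (hFpos s)
  have huIcc : uIcc (0:ℝ) T = Icc 0 T := uIcc_of_le hT.le
  have hFνsub : ∀ a b : ℝ, a ∈ Icc (0:ℝ) T → b ∈ Icc (0:ℝ) T →
      IntervalIntegrable Fν volume a b := by
    intro a b ha hb
    apply hFνint.mono_set
    rw [huIcc]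
    exact uIcc_subset_Icc ha hb
  have hFsub : ∀ a b : ℝ, a ∈ Icc (0:ℝ) T → b ∈ Icc (0:ℝ) T →
      IntervalIntegrable F volume a b := by
    intro a b ha hb
    apply hFint.mono_set
    rw [huIcc]
    exact uIcc_subset_Icc ha hb
  obtain ⟨H, hHdef⟩ : ∃ z : ℝ → ℝ, z = fun t => ∫ s in (0:ℝ)..t, Fν s := ⟨_, rfl⟩
  have hHcont : ContinuousOn H (Icc (0:ℝ) T) := by
    rw [hHdef]
    have := intervalIntegral.continuousOn_primitive_interval' hFνint
      (by rw [huIcc]; exact ⟨le_rfl, hT.le⟩)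
    rwa [huIcc] at this
  have hHnn : ∀ t ∈ Icc (0:ℝ) T, 0 ≤ H t := by
    intro t ht
    simp only [hHdef]
    exact intervalIntegral.integral_nonneg ht.1 (fun s _ => hFνnn s)
  have hHsub : ∀ a b : ℝ, a ∈ Icc (0:ℝ) T → b ∈ Icc (0:ℝ) T →
      H b - H a = ∫ s in a..b, Fν s := by
    intro a b ha hb
    simp only [hHdef]
    exact intervalIntegral.integral_interval_sub_left
      (hFνsub 0 b ⟨le_rfl, hT.le⟩ hb) (hFνsub 0 a ⟨le_rfl, hT.le⟩ ha)
  obtain ⟨HF, hHFdef⟩ : ∃ z : ℝ → ℝ, z = fun t => ∫ s in (0:ℝ)..t, F s := ⟨_, rfl⟩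
  have hHFcont : ContinuousOn HF (Icc (0:ℝ) T) := by
    rw [hHFdef]
    have := intervalIntegral.continuousOn_primitive_interval' hFint
      (by rw [huIcc]; exact ⟨le_rfl, hT.le⟩)
    rwa [huIcc] at this
  have hHFsub : ∀ a b : ℝ, a ∈ Icc (0:ℝ) T → b ∈ Icc (0:ℝ) T →
      HF b - HF a = ∫ s in a..b, F s := by
    intro a b ha hb
    simp only [hHFdef]
    exact intervalIntegral.integral_interval_sub_left
      (hFsub 0 b ⟨le_rfl, hT.le⟩ hb) (hFsub 0 a ⟨le_rfl, hT.le⟩ ha)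
  -- ## sum bound helper
  have hsumbound : ∀ (s : ℝ) (x : Fin d → ℝ) (a : ℝ), 0 ≤ a →
      (∀ lam ∈ Λ₁, v s (x + h • lam) - v s x ≤ a) →
      h⁻¹ * ∑ lam ∈ Λ₁, χ lam s x * ((v s (x + h • lam) - v s x) / h) ≤ K₀ * a := by
    intro s x a ha hva
    have hterm : ∀ lam ∈ Λ₁, χ lam s x * ((v s (x + h • lam) - v s x) / h) ≤ Mχ * (a / h) := by
      intro lam hl
      have h1 : (v s (x + h • lam) - v s x) / h ≤ a / h :=
        div_le_div_of_nonneg_right (hva lam hl) hh.le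
      calc χ lam s x * ((v s (x + h • lam) - v s x) / h)
          ≤ χ lam s x * (a / h) := mul_le_mul_of_nonneg_left h1 (hχpos lam hl s x)
        _ ≤ Mχ * (a / h) := mul_le_mul_of_nonneg_right
            ((le_abs_self _).trans (hMχ lam hl s x)) (div_nonneg ha hh.le)
    have hs1 : ∑ lam ∈ Λ₁, χ lam s x * ((v s (x + h • lam) - v s x) / h)
        ≤ (Λ₁.card : ℝ) * (Mχ * (a / h)) := by
      have := Finset.sum_le_card_nsmul Λ₁ _ _ hterm
      rwa [nsmul_eq_mul] at this
    have hs2 : h⁻¹ * ∑ lam ∈ Λ₁, χ lam s x * ((v s (x + h • lam) - v s x) / h)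
        ≤ h⁻¹ * ((Λ₁.card : ℝ) * (Mχ * (a / h))) :=
      mul_le_mul_of_nonneg_left hs1 (inv_nonneg.2 hh.le)
    have heq : h⁻¹ * ((Λ₁.card : ℝ) * (Mχ * (a / h))) = K₀ * a := by
      rw [hK₀def]
      field_simp
    linarith
  -- ## crude derivative bound
  have hcrude' : ∀ s ∈ Icc (0:ℝ) T, ∀ x ∈ Qo, v' s x ≤ κ + F s := by
    intro s hs x hx
    have hxQ : x ∈ Q := hQoQ hx
    have hq0 := hineq s hs x hx
    have hsum : h⁻¹ * ∑ lam ∈ Λ₁, χ lam s x * ((v s (x + h • lam) - v s x) / h)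
        ≤ K₀ * (2 * Mv) := by
      apply hsumbound s x (2 * Mv) (by linarith)
      intro lam hl
      have hxl : x + h • lam ∈ Q := by
        rw [hQo, Set.mem_sep_iff] at hx; exact hx.2 lam hl
      have h1 := hvub s hs _ hxl
      have h2 := (abs_le.1 (hMv s hs x hxQ)).1
      linarith
    have hcv : -(cc s x * v s x) ≤ Mc * Mv := by
      calc -(cc s x * v s x) ≤ |cc s x * v s x| := neg_le_abs _
        _ = |cc s x| * |v s x| := abs_mul _ _
        _ ≤ Mc * Mv := mul_le_mul (hMc s x) (hMv s hs x hxQ) (abs_nonneg _) hMc0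
    have hCb : C s x * max (vbar s) 0 ≤ MC * Mv := by
      have h1 : max (vbar s) 0 ≤ Mv := max_le (hvbar_le s hs) hMv0
      have h2 : C s x ≤ MC := (le_abs_self _).trans (hMC s x)
      have h3 : (0:ℝ) ≤ max (vbar s) 0 := le_max_right _ _
      calc C s x * max (vbar s) 0 ≤ MC * max (vbar s) 0 :=
            mul_le_mul_of_nonneg_right h2 h3
        _ ≤ MC * Mv := mul_le_mul_of_nonneg_left h1 hMC0
    rw [hκdef]
    linarith
  -- ## main loop
  intro t₀ ht₀
  have hGbdd : BddAbove ((fun p : ℝ × (Fin d → ℝ) => Real.exp (-ν * p.1) * max (v p.1 p.2) 0) ''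
      (({0} ×ˢ Q) ∪ (Icc (0:ℝ) t₀ ×ˢ (Q \ Qo)))) := by
    refine ⟨Real.exp (|ν| * T) * Mv, ?_⟩
    rintro _ ⟨⟨s, x⟩, hp, rfl⟩
    have hsx : s ∈ Icc (0:ℝ) T ∧ x ∈ Q := by
      rcases hp with hp | hp
      · rcases Set.mem_prod.1 hp with ⟨hs, hx⟩
        have hs0 : s = 0 := hs
        exact ⟨by rw [hs0]; exact ⟨le_rfl, hT.le⟩, hx⟩
      · rcases Set.mem_prod.1 hp with ⟨hs, hx⟩
        exact ⟨⟨hs.1, hs.2.trans ht₀.2⟩, hx.1⟩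
    have h1 : Real.exp (-ν * s) ≤ Real.exp (|ν| * T) := by
      apply Real.exp_le_exp.2
      have h2 : -ν * s ≤ |ν| * s := mul_le_mul_of_nonneg_right (neg_le_abs ν) hsx.1.1
      have h3 : |ν| * s ≤ |ν| * T := mul_le_mul_of_nonneg_left hsx.1.2 (abs_nonneg ν)
      linarith
    have h2 : max (v s x) 0 ≤ Mv := max_le (hvub s hsx.1 x hsx.2) hMv0
    exact mul_le_mul h1 h2 (le_max_right _ _) (Real.exp_nonneg _)
  have hGmem : ∀ s x, (s, x) ∈ (({(0:ℝ)} ×ˢ Q) ∪ (Icc (0:ℝ) t₀ ×ˢ (Q \ Qo))) →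
      Real.exp (-ν * s) * max (v s x) 0 ≤ G t₀ := by
    intro s x hp
    rw [hG]
    exact le_csSup hGbdd ⟨(s, x), hp, rfl⟩
  have hGnn : 0 ≤ G t₀ := by
    obtain ⟨x₀, hx₀⟩ := hQ
    have h1 : (0:ℝ) ≤ Real.exp (-ν * 0) * max (v 0 x₀) 0 := by positivity
    exact h1.trans (hGmem 0 x₀ (Or.inl (Set.mem_prod.2 ⟨rfl, hx₀⟩)))
  have hbdry : ∀ s x, (s, x) ∈ (({(0:ℝ)} ×ˢ Q) ∪ (Icc (0:ℝ) t₀ ×ˢ (Q \ Qo))) →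
      v s x ≤ G t₀ * Real.exp (ν * s) := by
    intro s x hp
    have h1 := hGmem s x hp
    have h3 : Real.exp (ν * s) * Real.exp (-ν * s) = 1 := by
      rw [← Real.exp_add, show ν * s + -ν * s = 0 by ring, Real.exp_zero]
    calc v s x ≤ max (v s x) 0 := le_max_left _ _
      _ = Real.exp (ν * s) * (Real.exp (-ν * s) * max (v s x) 0) := by
          rw [← mul_assoc, h3, one_mul]
      _ ≤ Real.exp (ν * s) * G t₀ :=
          mul_le_mul_of_nonneg_left h1 (Real.exp_nonneg _)
      _ = G t₀ * Real.exp (ν * s) := mul_comm _ _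
  -- ## key claim with epsilon
  have key : ∀ ε : ℝ, 0 < ε →
      vbar t₀ ≤ G t₀ * Real.exp (ν * t₀) + Real.exp (ν * t₀) * H t₀ + ε * Real.exp (K * t₀) := by
    intro ε hε
    obtain ⟨ψ, hψdef⟩ : ∃ z : ℝ → ℝ,
      z = fun t => (G t₀ + H t) * Real.exp (ν * t) + ε * Real.exp (K * t) := ⟨_, rfl⟩
    obtain ⟨P, hPdef⟩ : ∃ z : ℝ → ℝ,
      z = fun t => G t₀ + H t + ε * Real.exp ((K - ν) * t) := ⟨_, rfl⟩
    have hPψ : ∀ s : ℝ, P s = Real.exp (-ν * s) * ψ s := by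
      intro s
      simp only [hPdef, hψdef]
      have e1 : Real.exp (-ν * s) * Real.exp (ν * s) = 1 := by
        rw [← Real.exp_add, show -ν * s + ν * s = 0 by ring, Real.exp_zero]
      have e2 : Real.exp (-ν * s) * Real.exp (K * s) = Real.exp ((K - ν) * s) := by
        rw [← Real.exp_add]; congr 1; ring
      calc G t₀ + H s + ε * Real.exp ((K - ν) * s)
          = (G t₀ + H s) * 1 + ε * Real.exp ((K - ν) * s) := by ring
        _ = (G t₀ + H s) * (Real.exp (-ν * s) * Real.exp (ν * s))
            + ε * (Real.exp (-ν * s) * Real.exp (K * s)) := by rw [e1, e2]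
        _ = Real.exp (-ν * s) * ((G t₀ + H s) * Real.exp (ν * s) + ε * Real.exp (K * s)) := by
            ring
    have hψcont : ContinuousOn ψ (Icc (0:ℝ) T) := by
      rw [hψdef]
      apply ContinuousOn.add
      · exact (continuousOn_const.add hHcont).mul ((hexpcont ν).continuousOn)
      · exact continuousOn_const.mul ((hexpcont K).continuousOn)
    have hPcont : ContinuousOn P (Icc (0:ℝ) T) := by
      rw [hPdef]
      apply ContinuousOn.add
      · exact continuousOn_const.add hHcont
      · exact continuousOn_const.mul ((hexpcont (K - ν)).continuousOn)
    have hψnn : ∀ s ∈ Icc (0:ℝ) T, 0 ≤ ψ s := by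
      intro s hs
      have h1 := hHnn s hs
      simp only [hψdef]
      have h2 : 0 ≤ (G t₀ + H s) * Real.exp (ν * s) :=
        mul_nonneg (by linarith) (Real.exp_nonneg _)
      have h3 : 0 ≤ ε * Real.exp (K * s) := mul_nonneg hε.le (Real.exp_nonneg _)
      linarith
    have hψgap : ∀ s ∈ Icc (0:ℝ) t₀, G t₀ * Real.exp (ν * s) + ε ≤ ψ s := by
      intro s hs
      have hsT : s ∈ Icc (0:ℝ) T := ⟨hs.1, hs.2.trans ht₀.2⟩
      have h1 : (1:ℝ) ≤ Real.exp (K * s) := by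
        have := Real.exp_le_exp.2 (show (0:ℝ) ≤ K * s from mul_nonneg hK0 hs.1)
        rwa [Real.exp_zero] at this
      have h2 := hHnn s hsT
      simp only [hψdef]
      have h3 : 0 ≤ H s * Real.exp (ν * s) := mul_nonneg h2 (Real.exp_nonneg _)
      have h4 : ε * 1 ≤ ε * Real.exp (K * s) := mul_le_mul_of_nonneg_left h1 hε.le
      have h5 : (G t₀ + H s) * Real.exp (ν * s)
          = G t₀ * Real.exp (ν * s) + H s * Real.exp (ν * s) := by ring
      linarith
    obtain ⟨B, hBdef⟩ : ∃ z : Set ℝ,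
      z = {t : ℝ | t ∈ Icc (0:ℝ) t₀ ∧ ∃ x ∈ Q, ψ t < v t x} := ⟨_, rfl⟩
    have hBempty : B = ∅ := by
      by_contra hBne
      rw [← Ne, ← nonempty_iff_ne_empty] at hBne
      obtain ⟨b₀, hb₀⟩ := hBne
      have hb₀' := hb₀
      rw [hBdef] at hb₀'
      obtain ⟨τ, hτdef⟩ : ∃ z : ℝ, z = sInf B := ⟨_, rfl⟩
      have hBlb : BddBelow B := by
        refine ⟨0, fun t ht => ?_⟩
        rw [hBdef] at ht
        exact ht.1.1
      have hτle : ∀ t ∈ B, τ ≤ t := fun t ht => by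
        rw [hτdef]; exact csInf_le hBlb ht
      have hτ0 : 0 ≤ τ := by
        rw [hτdef]
        exact le_csInf ⟨b₀, hb₀⟩ fun t ht => by rw [hBdef] at ht; exact ht.1.1
      have hτt₀ : τ ≤ t₀ := (hτle b₀ hb₀).trans hb₀'.1.2
      have hτT : τ ≤ T := hτt₀.trans ht₀.2
      have hGood : ∀ s, 0 ≤ s → s < τ → ∀ x ∈ Q, v s x ≤ ψ s := by
        intro s hs0 hsτ x hx
        by_contra hlt
        push_neg at hlt
        have hsB : s ∈ B := by
          rw [hBdef]
          exact ⟨⟨hs0, hsτ.le.trans hτt₀⟩, x, hx, hlt⟩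
        exact absurd (hτle s hsB) (not_le.2 hsτ)
      have hGoodSup : ∀ s, 0 ≤ s → s < τ → max (vbar s) 0 ≤ ψ s := by
        intro s hs0 hsτ
        have hsT : s ∈ Icc (0:ℝ) T := ⟨hs0, hsτ.le.trans hτT⟩
        refine max_le ?_ (hψnn s hsT)
        rw [hvbar]
        exact csSup_le (hQ.image _) (by rintro _ ⟨x, hx, rfl⟩; exact hGood s hs0 hsτ x hx)
      -- ### gap at τ for x ∈ Qo
      have hgapQo : ∀ x ∈ Qo, v τ x ≤ ψ τ - ε / (2 * K₂ + 2) * Real.exp (ν * τ) := by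
        intro x hx
        have hxQ : x ∈ Q := hQoQ hx
        obtain ⟨w, hwdef⟩ : ∃ z : ℝ → ℝ, z = fun s => Real.exp (-ν * s) * v s x := ⟨_, rfl⟩
        obtain ⟨y, hydef⟩ : ∃ z : ℝ → ℝ, z = fun s => P s - w s := ⟨_, rfl⟩
        have hyPw : ∀ u, y u = P u - w u := fun u => by rw [hydef]
        have hwcont : ContinuousOn w (Icc (0:ℝ) T) := by
          rw [hwdef]
          exact ((hexpcont (-ν)).continuousOn).mul (hvcont x hx)
        have hycont : ContinuousOn y (Icc (0:ℝ) T) := by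
          rw [hydef]
          exact hPcont.sub hwcont
        have hw' : ∀ s ∈ Icc (0:ℝ) T,
            HasDerivAt w (Real.exp (-ν * s) * (v' s x - ν * v s x)) s := by
          intro s hs
          rw [hwdef]
          have h1 : HasDerivAt (fun u : ℝ => -ν * u) (-ν) s := by
            simpa using (hasDerivAt_id s).const_mul (-ν)
          have h2 : HasDerivAt (fun u : ℝ => Real.exp (-ν * u)) (Real.exp (-ν * s) * -ν) s :=
            h1.exp
          have h3 := h2.mul (hderiv s hs x hx)
          exact h3.congr_deriv (by ring)
        have hyineq : ∀ r t : ℝ, 0 ≤ r → r ≤ t → t ≤ τ →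
            ε * (t - r) - K₂ * ∫ s in r..t, y s ≤ y t - y r := by
          intro r t hr hrt htτ
          have hrT : r ∈ Icc (0:ℝ) T := ⟨hr, (hrt.trans htτ).trans hτT⟩
          have htT : t ∈ Icc (0:ℝ) T := ⟨hr.trans hrt, htτ.trans hτT⟩
          have hwle : w t - w r ≤ ∫ s in r..t, (K₂ * y s + Fν s) := by
            apply intervalIntegral.sub_le_integral_of_hasDeriv_right_of_le hrt
              (hwcont.mono (Icc_subset_Icc hrT.1 htT.2))
              (fun s hs => (hw' s ⟨hr.trans hs.1.le, hs.2.le.trans htT.2⟩).hasDerivWithinAt)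
            · apply MeasureTheory.Integrable.add
              · exact (continuousOn_const.mul (hycont.mono
                  (Icc_subset_Icc hrT.1 htT.2))).integrableOn_Icc
              · have := hFνsub r t hrT htT
                rwa [intervalIntegrable_iff_integrableOn_Icc_of_le hrt] at this
            · intro s hs
              have hsT : s ∈ Icc (0:ℝ) T := ⟨hr.trans hs.1.le, hs.2.le.trans htT.2⟩
              have hsτ : s < τ := hs.2.trans_le htτ
              have hvψ : v s x ≤ ψ s := hGood s hsT.1 hsτ x hxQ
              have hsum : h⁻¹ * ∑ lam ∈ Λ₁, χ lam s x * ((v s (x + h • lam) - v s x) / h)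
                  ≤ K₀ * (ψ s - v s x) := by
                apply hsumbound s x (ψ s - v s x) (by linarith)
                intro lam hl
                have hxl : x + h • lam ∈ Q := by
                  rw [hQo, Set.mem_sep_iff] at hx; exact hx.2 lam hl
                have := hGood s hsT.1 hsτ _ hxl
                linarith
              have hcv : -(cc s x * v s x) ≤ -(cc s x * ψ s) + Mc * (ψ s - v s x) := by
                have h1 : cc s x * (ψ s - v s x) ≤ Mc * (ψ s - v s x) :=
                  mul_le_mul_of_nonneg_right ((le_abs_self _).trans (hMc s x)) (by linarith)
                have h2 : -(cc s x * v s x) = -(cc s x * ψ s) + cc s x * (ψ s - v s x) := by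
                  ring
                linarith
              have hCb : C s x * max (vbar s) 0 ≤ C s x * ψ s :=
                mul_le_mul_of_nonneg_left (hGoodSup s hsT.1 hsτ) (hCpos s x)
              have hν' : (C s x - cc s x) * ψ s ≤ ν * ψ s :=
                mul_le_mul_of_nonneg_right (hνub s hsT x hx) (hψnn s hsT)
              have hkey1 : v' s x ≤ (K₀ + Mc) * (ψ s - v s x) + ν * ψ s + F s := by
                have hq0 := hineq s hsT x hx
                have hexp1 : (C s x - cc s x) * ψ s = C s x * ψ s - cc s x * ψ s := by ring
                have hexp2 : (K₀ + Mc) * (ψ s - v s x)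
                    = K₀ * (ψ s - v s x) + Mc * (ψ s - v s x) := by ring
                linarith
              have h3 : v' s x - ν * v s x ≤ K₂ * (ψ s - v s x) + F s := by
                have hexp3 : ν * ψ s - ν * v s x = ν * (ψ s - v s x) := by ring
                have h2' : ν * (ψ s - v s x) ≤ |ν| * (ψ s - v s x) :=
                  mul_le_mul_of_nonneg_right (le_abs_self ν) (by linarith)
                have hexp4 : K₂ * (ψ s - v s x)
                    = (K₀ + Mc) * (ψ s - v s x) + |ν| * (ψ s - v s x) := by
                  rw [hK₂def]; ring
                linarith
              have h4 : Real.exp (-ν * s) * (v' s x - ν * v s x)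
                  ≤ Real.exp (-ν * s) * (K₂ * (ψ s - v s x) + F s) :=
                mul_le_mul_of_nonneg_left h3 (Real.exp_nonneg _)
              have h5 : Real.exp (-ν * s) * (K₂ * (ψ s - v s x) + F s) = K₂ * y s + Fν s := by
                have hys : y s = Real.exp (-ν * s) * ψ s - Real.exp (-ν * s) * v s x := by
                  rw [hyPw, hPψ s, hwdef]
                rw [hys]
                simp only [hFνdef]
                ring
              linarith
          have hHtr : H t - H r = ∫ s in r..t, Fν s := hHsub r t hrT htT
          have hexp_ge : (t - r) ≤ Real.exp ((K - ν) * t) - Real.exp ((K - ν) * r) := by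
            have h1 : Real.exp ((K - ν) * r) * ((K - ν) * (t - r))
                ≤ Real.exp ((K - ν) * r) * (Real.exp ((K - ν) * (t - r)) - 1) := by
              apply mul_le_mul_of_nonneg_left _ (Real.exp_nonneg _)
              linarith [Real.add_one_le_exp ((K - ν) * (t - r))]
            have h2 : Real.exp ((K - ν) * r) * (Real.exp ((K - ν) * (t - r)) - 1)
                = Real.exp ((K - ν) * t) - Real.exp ((K - ν) * r) := by
              rw [mul_sub, ← Real.exp_add, mul_one]
              congr 2
              ring
            have he : 1 ≤ Real.exp ((K - ν) * r) := by
              have := Real.exp_le_exp.2 (show (0:ℝ) ≤ (K - ν) * r from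
                mul_nonneg (by linarith) hr)
              rwa [Real.exp_zero] at this
            have hq : 0 ≤ (K - ν) * (t - r) :=
              mul_nonneg (by linarith) (sub_nonneg.2 hrt)
            have h3' : 1 * (t - r) ≤ (K - ν) * (t - r) :=
              mul_le_mul_of_nonneg_right hKν (sub_nonneg.2 hrt)
            have h4' : 1 * ((K - ν) * (t - r)) ≤ Real.exp ((K - ν) * r) * ((K - ν) * (t - r)) :=
              mul_le_mul_of_nonneg_right he hq
            have h3 : (t - r) ≤ Real.exp ((K - ν) * r) * ((K - ν) * (t - r)) := by
              rw [one_mul] at h3' h4'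
              linarith
            linarith
          have hPinc : (∫ s in r..t, Fν s) + ε * (t - r) ≤ P t - P r := by
            have h1 : ε * (t - r) ≤ ε * (Real.exp ((K - ν) * t) - Real.exp ((K - ν) * r)) :=
              mul_le_mul_of_nonneg_left hexp_ge hε.le
            have h2 : ε * (Real.exp ((K - ν) * t) - Real.exp ((K - ν) * r))
                = ε * Real.exp ((K - ν) * t) - ε * Real.exp ((K - ν) * r) := by ring
            simp only [hPdef]
            linarith
          have hyint_rt : IntervalIntegrable y volume r t := by
            apply ContinuousOn.intervalIntegrable
            rw [uIcc_of_le hrt]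
            exact hycont.mono (Icc_subset_Icc hrT.1 htT.2)
          have hsplit : ∫ s in r..t, (K₂ * y s + Fν s)
              = K₂ * (∫ s in r..t, y s) + ∫ s in r..t, Fν s := by
            rw [intervalIntegral.integral_add (hyint_rt.const_mul K₂) (hFνsub r t hrT htT),
              intervalIntegral.integral_const_mul]
          have hy_t := hyPw t
          have hy_r := hyPw r
          linarith
        have hy0 : ε ≤ y 0 := by
          have hH0 : H 0 = 0 := by simp only [hHdef]; exact intervalIntegral.integral_same
          have hv0 : v 0 x ≤ G t₀ := by
            have := hbdry 0 x (Or.inl (Set.mem_prod.2 ⟨rfl, hxQ⟩))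
            simpa using this
          have hw0 : w 0 = v 0 x := by
            simp only [hwdef]
            norm_num
          have hP0 : P 0 = G t₀ + ε := by
            simp only [hPdef, hH0]
            norm_num
          rw [hyPw, hw0, hP0]
          linarith
        have hyτ := aux_persist hε hK₂0 (hycont.mono (Icc_subset_Icc le_rfl hτT)) hy0
          hyineq τ ⟨hτ0, le_rfl⟩
        have hyτ' : ε / (2 * K₂ + 2) ≤ Real.exp (-ν * τ) * (ψ τ - v τ x) := by
          have h1 : y τ = Real.exp (-ν * τ) * (ψ τ - v τ x) := by
            rw [hyPw, hPψ τ, hwdef]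
            ring
          linarith [hyτ, h1.le, h1.ge]
        have hmul := mul_le_mul_of_nonneg_left hyτ' (Real.exp_nonneg (ν * τ))
        have hee : Real.exp (ν * τ) * Real.exp (-ν * τ) = 1 := by
          rw [← Real.exp_add, show ν * τ + -ν * τ = 0 by ring, Real.exp_zero]
        have h2 : Real.exp (ν * τ) * (Real.exp (-ν * τ) * (ψ τ - v τ x)) = ψ τ - v τ x := by
          rw [← mul_assoc, hee, one_mul]
        rw [h2] at hmul
        have h6 : Real.exp (ν * τ) * (ε / (2 * K₂ + 2)) = ε / (2 * K₂ + 2) * Real.exp (ν * τ) :=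
          mul_comm _ _
        linarith
      -- ### crude growth bound after τ
      have hcrude : ∀ x ∈ Qo, ∀ t, τ ≤ t → t ≤ t₀ →
          v t x ≤ v τ x + (κ * (t - τ) + (HF t - HF τ)) := by
        intro x hx t hτt htt₀
        have htT : t ≤ T := htt₀.trans ht₀.2
        have htTm : t ∈ Icc (0:ℝ) T := ⟨hτ0.trans hτt, htT⟩
        have hHFtr : HF t - HF τ = ∫ s in τ..t, F s := hHFsub τ t ⟨hτ0, hτT⟩ htTm
        have hle : v t x - v τ x ≤ ∫ s in τ..t, (κ + F s) := by
          apply intervalIntegral.sub_le_integral_of_hasDeriv_right_of_le hτt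
            ((hvcont x hx).mono (Icc_subset_Icc hτ0 htT))
            (fun s hs => (hderiv s ⟨hτ0.trans hs.1.le, hs.2.le.trans htT⟩ x hx).hasDerivWithinAt)
          · rw [← intervalIntegrable_iff_integrableOn_Icc_of_le hτt]
            exact (_root_.intervalIntegrable_const (c := κ)).add (hFsub τ t ⟨hτ0, hτT⟩ htTm)
          · exact fun s hs => hcrude' s ⟨hτ0.trans hs.1.le, hs.2.le.trans htT⟩ x hx
        have hsplit : ∫ s in τ..t, (κ + F s) = κ * (t - τ) + ∫ s in τ..t, F s := by
          rw [intervalIntegral.integral_add (_root_.intervalIntegrable_const)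
            (hFsub τ t ⟨hτ0, hτT⟩ htTm), intervalIntegral.integral_const, smul_eq_mul]
          ring
        linarith
      -- ### contradiction
      obtain ⟨δ₀, hδ₀def⟩ : ∃ z : ℝ, z = ε / (2 * K₂ + 2) * Real.exp (ν * τ) := ⟨_, rfl⟩
      have hδ₀pos : 0 < δ₀ := by
        rw [hδ₀def]
        exact mul_pos (div_pos hε (by linarith)) (Real.exp_pos _)
      obtain ⟨δ, hδdef⟩ : ∃ z : ℝ, z = min δ₀ ε := ⟨_, rfl⟩
      have hδpos : 0 < δ := by rw [hδdef]; exact lt_min hδ₀pos hε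
      have hδδ₀ : δ ≤ δ₀ := by rw [hδdef]; exact min_le_left _ _
      have hδε : δ ≤ ε := by rw [hδdef]; exact min_le_right _ _
      have hψτct := hψcont τ ⟨hτ0, hτT⟩
      rw [Metric.continuousWithinAt_iff] at hψτct
      obtain ⟨η₁, hη₁pos, hη₁⟩ := hψτct (δ / 4) (by linarith)
      have hHFτct := hHFcont τ ⟨hτ0, hτT⟩
      rw [Metric.continuousWithinAt_iff] at hHFτct
      obtain ⟨η₃, hη₃pos, hη₃⟩ := hHFτct (δ / 4) (by linarith)
      obtain ⟨X, hXdef⟩ : ∃ z : ℝ, z = (δ / 4) / (κ + 1) := ⟨_, rfl⟩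
      have hXpos : 0 < X := by
        rw [hXdef]
        exact div_pos (by linarith) (by linarith)
      obtain ⟨η, hηdef⟩ : ∃ z : ℝ, z = min η₁ (min η₃ X) := ⟨_, rfl⟩
      have hηpos : 0 < η := by
        rw [hηdef]
        exact lt_min hη₁pos (lt_min hη₃pos hXpos)
      obtain ⟨b, hb, hbη⟩ := exists_lt_of_csInf_lt ⟨b₀, hb₀⟩
        (show sInf B < τ + η by rw [← hτdef]; linarith)
      have hτb : τ ≤ b := hτle b hb
      rw [hBdef] at hb
      obtain ⟨hbI, xb, hxb, hψb⟩ := hb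
      have hbT : b ∈ Icc (0:ℝ) T := ⟨hbI.1, hbI.2.trans ht₀.2⟩
      have hdb : dist b τ < η := by
        rw [Real.dist_eq, abs_of_nonneg (by linarith)]
        linarith
      have hηη₁ : η ≤ η₁ := by rw [hηdef]; exact min_le_left _ _
      have hηη₃ : η ≤ η₃ := by rw [hηdef]; exact (min_le_right _ _).trans (min_le_left _ _)
      have hηX : η ≤ X := by rw [hηdef]; exact (min_le_right _ _).trans (min_le_right _ _)
      rcases em (xb ∈ Qo) with hxQo | hxnQo
      · have h1 := hgapQo xb hxQo
        have h2 := hcrude xb hxQo b hτb hbI.2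
        have h3 : |ψ b - ψ τ| < δ / 4 := by
          have := hη₁ hbT (lt_of_lt_of_le hdb hηη₁)
          rwa [Real.dist_eq] at this
        have h4 : HF b - HF τ ≤ δ / 4 := by
          have := hη₃ hbT (lt_of_lt_of_le hdb hηη₃)
          rw [Real.dist_eq] at this
          linarith [(abs_lt.1 this).2]
        have h5 : κ * (b - τ) ≤ δ / 4 := by
          have hbX : b - τ < X := by linarith
          have h6 : κ * (b - τ) ≤ (κ + 1) * (b - τ) := by
            have h7 : (κ + 1) * (b - τ) - κ * (b - τ) = b - τ := by ring
            linarith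
          have h8 : (κ + 1) * (b - τ) ≤ (κ + 1) * X :=
            mul_le_mul_of_nonneg_left hbX.le (by linarith)
          have hXeq : (κ + 1) * X = δ / 4 := by
            rw [hXdef, mul_comm]
            exact div_mul_cancel₀ _ (by linarith)
          linarith
        have habs := abs_lt.1 h3
        have hfin : v b xb ≤ ψ b - δ / 4 := by
          linarith [habs.1, habs.2]
        linarith
      · have hbd := hbdry b xb (Or.inr (Set.mem_prod.2 ⟨hbI, ⟨hxb, hxnQo⟩⟩))
        have := hψgap b hbI
        linarith
    -- ### B empty gives the bound at t₀
    have hall : ∀ x ∈ Q, v t₀ x ≤ ψ t₀ := by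
      intro x hx
      by_contra hlt
      push_neg at hlt
      have : t₀ ∈ B := by
        rw [hBdef]
        exact ⟨⟨ht₀.1, le_rfl⟩, x, hx, hlt⟩
      rw [hBempty] at this
      exact absurd this (notMem_empty _)
    have h2 : vbar t₀ ≤ ψ t₀ := by
      rw [hvbar]
      exact csSup_le (hQ.image _) (by rintro _ ⟨x, hx, rfl⟩; exact hall x hx)
    have h3 : ψ t₀ = G t₀ * Real.exp (ν * t₀) + Real.exp (ν * t₀) * H t₀
        + ε * Real.exp (K * t₀) := by
      simp only [hψdef]
      ring
    linarith
  -- ## conclude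
  have hEH : Real.exp (ν * t₀) * H t₀ = ∫ s in (0:ℝ)..t₀, F s * Real.exp (ν * (t₀ - s)) := by
    simp only [hHdef, hFνdef]
    rw [← intervalIntegral.integral_const_mul]
    apply intervalIntegral.integral_congr
    intro s _
    simp only
    rw [← mul_assoc, ← Real.exp_add, show ν * t₀ + -ν * s = ν * (t₀ - s) by ring]
    ring
  apply le_of_forall_pos_le_add
  intro ρ hρ
  have hkey := key (ρ * Real.exp (-(K * t₀))) (by positivity)
  have hexpK : ρ * Real.exp (-(K * t₀)) * Real.exp (K * t₀) = ρ := by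
    rw [mul_assoc, ← Real.exp_add, show -(K * t₀) + K * t₀ = 0 by ring, Real.exp_zero, mul_one]
  linarith [hkey, hEH.le, hEH.ge]
end
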